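/- arXiv:1609.07402 — 2 statements merged into one kernel-verified Lean document; each statement's English description precedes it below -/
import Mathlib

section
/- Let ρ > 0 and let V ∈ Sym(n) be positive semidefinite on the null space of a matrix E ∈ ℝ^{p×n} (i.e., Ez = 0 implies zᵀVz ≥ 0). Then there exists μ > 0 such that ρI + V + μEᵀE is positive definite. -/
open Matrix

private lemma cont_quad {n : ℕ} (M : Matrix (Fin n) (Fin n) ℝ) :
    Continuous fun z : Fin n → ℝ => z ⬝ᵥ M.mulVec z := by
  simp only [dotProduct, mulVec]
  fun_prop

private lemma dp_self_nonneg {n : ℕ} (z : Fin n → ℝ) : 0 ≤ z ⬝ᵥ z :=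
  Finset.sum_nonneg fun i _ => mul_self_nonneg _

private lemma quad_smul {n : ℕ} (M : Matrix (Fin n) (Fin n) ℝ) (c : ℝ) (z : Fin n → ℝ) :
    (c • z) ⬝ᵥ M.mulVec (c • z) = c ^ 2 * (z ⬝ᵥ M.mulVec z) := by
  rw [Matrix.mulVec_smul, dotProduct_smul, smul_dotProduct]
  simp [smul_eq_mul]
  ring

theorem stmt_8 (n p : ℕ) (ρ : ℝ) (hρ : 0 < ρ)
    (V : Matrix (Fin n) (Fin n) ℝ) (hV : V.IsSymm)
    (E : Matrix (Fin p) (Fin n) ℝ)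
    (hnull : ∀ z : Fin n → ℝ, E.mulVec z = 0 → 0 ≤ z ⬝ᵥ V.mulVec z) :
    ∃ μ : ℝ, 0 < μ ∧ (ρ • (1 : Matrix (Fin n) (Fin n) ℝ) + V + μ • (E.transpose * E)).PosDef := by
  set f : (Fin n → ℝ) → ℝ := fun z => ρ * (z ⬝ᵥ z) + z ⬝ᵥ V.mulVec z with hf
  set g : (Fin n → ℝ) → ℝ := fun z => z ⬝ᵥ (Eᵀ * E).mulVec z with hg
  clear_value f g
  have hgE : ∀ z, g z = (E.mulVec z) ⬝ᵥ (E.mulVec z) := by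
    intro z
    simp only [hg, ← Matrix.mulVec_mulVec, Matrix.dotProduct_mulVec, Matrix.vecMul_transpose]
  have hg0 : ∀ z, 0 ≤ g z := fun z => by rw [hgE]; exact dp_self_nonneg _
  have hgzero : ∀ z, g z = 0 → E.mulVec z = 0 := by
    intro z hz
    rw [hgE] at hz
    exact dotProduct_self_eq_zero.mp hz
  have hfpos : ∀ z : Fin n → ℝ, z ≠ 0 → E.mulVec z = 0 → 0 < f z := by
    intro z hz hez
    have h1 : 0 < z ⬝ᵥ z := by
      rcases (dp_self_nonneg z).lt_or_eq with h | h
      · exact h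
      · exact absurd (dotProduct_self_eq_zero.mp h.symm) hz
    have := hnull z hez
    simp only [hf]
    nlinarith
  have hfc : Continuous f := by
    have h1 := cont_quad V
    have h2 : Continuous fun z : Fin n → ℝ => z ⬝ᵥ z := by
      simp only [dotProduct]; fun_prop
    simp only [hf]
    fun_prop
  have hgc : Continuous g := by rw [hg]; exact cont_quad (Eᵀ * E)
  -- key: find μ > 0 working on the unit sphere
  have key : ∃ μ : ℝ, 0 < μ ∧ ∀ z : Fin n → ℝ, ‖z‖ = 1 → 0 < f z + μ * g z := by
    set S : Set (Fin n → ℝ) := Metric.sphere 0 1 with hS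
    set A : Set (Fin n → ℝ) := S ∩ f ⁻¹' Set.Iic 0 with hA
    have hAcomp : IsCompact A :=
      (isCompact_sphere 0 1).inter_right (isClosed_Iic.preimage hfc)
    by_cases hAne : A.Nonempty
    · obtain ⟨zg, hzgA, hzgmin⟩ := hAcomp.exists_isMinOn hAne hgc.continuousOn
      obtain ⟨zf, hzfA, hzfmin⟩ := hAcomp.exists_isMinOn hAne hfc.continuousOn
      have hzg_ne : zg ≠ 0 := by
        intro h
        have : ‖zg‖ = 1 := by simpa [hS] using hzgA.1
        simp [h] at this
      have hm : 0 < g zg := by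
        rcases (hg0 zg).lt_or_eq with h | h
        · exact h
        · exact absurd hzgA.2 (not_le.mpr (hfpos zg hzg_ne (hgzero zg h.symm)))
      have hM : f zf ≤ 0 := hzfA.2
      have hμpos : 0 < (1 - f zf) / g zg := div_pos (by linarith) hm
      refine ⟨(1 - f zf) / g zg, hμpos, ?_⟩
      intro z hz
      have hzS : z ∈ S := by simpa [hS] using hz
      by_cases hfz : f z ≤ 0
      · have hzA : z ∈ A := ⟨hzS, hfz⟩
        have h1 : f zf ≤ f z := hzfmin hzA
        have h2 : g zg ≤ g z := hzgmin hzA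
        have h3 : (1 - f zf) / g zg * g zg ≤ (1 - f zf) / g zg * g z :=
          mul_le_mul_of_nonneg_left h2 hμpos.le
        rw [div_mul_cancel₀ _ hm.ne'] at h3
        linarith
      · push_neg at hfz
        have h4 : 0 ≤ (1 - f zf) / g zg * g z := mul_nonneg hμpos.le (hg0 z)
        linarith
    · refine ⟨1, one_pos, ?_⟩
      intro z hz
      have hzS : z ∈ S := by simpa [hS] using hz
      have hfz : 0 < f z := by
        by_contra h
        exact hAne ⟨z, hzS, by simpa using not_lt.mp h⟩
      have := hg0 z
      linarith
  obtain ⟨μ, hμ, hsphere⟩ := key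
  set Q : Matrix (Fin n) (Fin n) ℝ := ρ • (1 : Matrix (Fin n) (Fin n) ℝ) + V + μ • (Eᵀ * E)
    with hQ
  have hquad : ∀ z : Fin n → ℝ, z ⬝ᵥ Q.mulVec z = f z + μ * g z := by
    intro z
    simp only [hQ, Matrix.add_mulVec, dotProduct_add, Matrix.smul_mulVec,
      Matrix.one_mulVec, dotProduct_smul, smul_eq_mul, hf, hg]
  refine ⟨μ, hμ, Matrix.PosDef.of_dotProduct_mulVec_pos ?_ ?_⟩
  · -- Hermitian
    have hEh : (Eᵀ * E).IsHermitian := by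
      have := Matrix.isHermitian_conjTranspose_mul_self E
      rwa [Matrix.conjTranspose_eq_transpose_of_trivial] at this
    have hVh : V.IsHermitian := by
      rw [Matrix.IsHermitian, Matrix.conjTranspose_eq_transpose_of_trivial]
      exact hV
    show Qᴴ = Q
    simp only [hQ, Matrix.conjTranspose_add, Matrix.conjTranspose_smul, star_trivial,
      Matrix.conjTranspose_one, hVh.eq, hEh.eq]
  · intro x hx
    have hxn : 0 < ‖x‖ := norm_pos_iff.mpr hx
    set w : Fin n → ℝ := ‖x‖⁻¹ • x with hw
    have hwn : ‖w‖ = 1 := by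
      rw [hw, norm_smul, norm_inv, norm_norm, inv_mul_cancel₀ hxn.ne']
    have hxw : x = ‖x‖ • w := by
      rw [hw, smul_smul, mul_inv_cancel₀ hxn.ne', one_smul]
    have hpos : 0 < f w + μ * g w := hsphere w hwn
    have e1 : x ⬝ᵥ Q.mulVec x = ‖x‖ ^ 2 * (w ⬝ᵥ Q.mulVec w) := by
      conv_lhs => rw [hxw]
      exact quad_smul Q ‖x‖ w
    rw [star_trivial, e1, hquad w]
    exact mul_pos (pow_pos hxn 2) hpos
end

section
/- Let V ∈ Sym(n) and E ∈ ℝ^{p×n}. If for all μ > 0 the matrix ρI + V + μEᵀE (with ρ > 0 fixed) fails to be positive definite, then there exists a unit vector z̄ with Ez̄ = 0 and z̄ᵀVz̄ < 0; in particular V is not positive semidefinite on Null(E). -/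
open Matrix Filter Topology

lemma cont_mulVec {m n : ℕ} (A : Matrix (Fin m) (Fin n) ℝ) :
    Continuous fun z : Fin n → ℝ => A *ᵥ z :=
  A.mulVecLin.continuous_of_finiteDimensional

lemma cont_dot {m : ℕ} :
    Continuous fun p : (Fin m → ℝ) × (Fin m → ℝ) => p.1 ⬝ᵥ p.2 := by
  unfold dotProduct
  exact continuous_finset_sum _ fun i _ =>
    ((continuous_apply i).comp continuous_fst).mul ((continuous_apply i).comp continuous_snd)

lemma dot_self_nonneg {m : ℕ} (v : Fin m → ℝ) : 0 ≤ v ⬝ᵥ v :=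
  Finset.sum_nonneg fun i _ => mul_self_nonneg _

lemma exists_unit_nonpos {n : ℕ} (M : Matrix (Fin n) (Fin n) ℝ) (hM : M.IsHermitian)
    (h : ¬ M.PosDef) : ∃ z : Fin n → ℝ, z ⬝ᵥ z = 1 ∧ z ⬝ᵥ M *ᵥ z ≤ 0 := by
  rw [Matrix.posDef_iff_dotProduct_mulVec] at h
  push_neg at h
  obtain ⟨x, hx, hxm⟩ := h hM
  rw [star_trivial] at hxm
  have hxx : 0 < x ⬝ᵥ x :=
    lt_of_le_of_ne (dot_self_nonneg x) (fun e => hx (dotProduct_self_eq_zero.mp e.symm))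
  set c : ℝ := (Real.sqrt (x ⬝ᵥ x))⁻¹ with hc
  have hs : 0 < Real.sqrt (x ⬝ᵥ x) := Real.sqrt_pos.mpr hxx
  have hss := Real.mul_self_sqrt hxx.le
  have hc0 : 0 ≤ c := inv_nonneg.mpr hs.le
  refine ⟨c • x, ?_, ?_⟩
  · rw [smul_dotProduct, dotProduct_smul, smul_eq_mul, smul_eq_mul, hc, ← hss]
    field_simp
    rw [Real.sqrt_sq hs.le]
  · rw [mulVec_smul, smul_dotProduct, dotProduct_smul, smul_eq_mul, smul_eq_mul]
    exact mul_nonpos_iff.mpr (Or.inl ⟨hc0, mul_nonpos_iff.mpr (Or.inl ⟨hc0, hxm⟩)⟩)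

lemma abs_le_one_of_unit {m : ℕ} {v : Fin m → ℝ} (hv : v ⬝ᵥ v = 1) (i : Fin m) :
    |v i| ≤ 1 := by
  rw [abs_le_one_iff_mul_self_le_one]
  calc v i * v i ≤ ∑ j, v j * v j :=
        Finset.single_le_sum (fun j _ => mul_self_nonneg (v j)) (Finset.mem_univ i)
    _ = 1 := hv

lemma quad_bound {n : ℕ} (V : Matrix (Fin n) (Fin n) ℝ) (v : Fin n → ℝ)
    (hv : ∀ i, |v i| ≤ 1) : |v ⬝ᵥ V *ᵥ v| ≤ ∑ i, ∑ j, |V i j| := by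
  simp only [mulVec, dotProduct]
  calc |∑ i, v i * ∑ j, V i j * v j| ≤ ∑ i, |v i * ∑ j, V i j * v j| :=
        Finset.abs_sum_le_sum_abs _ _
    _ ≤ ∑ i, ∑ j, |V i j| := by
        apply Finset.sum_le_sum
        intro i _
        rw [abs_mul]
        calc |v i| * |∑ j, V i j * v j| ≤ 1 * ∑ j, |V i j| := by
              apply mul_le_mul (hv i) ?_ (abs_nonneg _) zero_le_one
              calc |∑ j, V i j * v j| ≤ ∑ j, |V i j * v j| := Finset.abs_sum_le_sum_abs _ _
                _ ≤ ∑ j, |V i j| := by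
                    apply Finset.sum_le_sum
                    intro j _
                    rw [abs_mul]
                    exact mul_le_of_le_one_right (abs_nonneg _) (hv j)
          _ = ∑ j, |V i j| := one_mul _

theorem stmt_9 (n p : ℕ) (ρ : ℝ) (hρ : 0 < ρ)
    (V : Matrix (Fin n) (Fin n) ℝ) (hV : V.IsSymm)
    (E : Matrix (Fin p) (Fin n) ℝ)
    (h : ∀ μ : ℝ, 0 < μ →
      ¬ (ρ • (1 : Matrix (Fin n) (Fin n) ℝ) + V + μ • (E.transpose * E)).PosDef) :
    ∃ z : Fin n → ℝ, z ⬝ᵥ z = 1 ∧ E.mulVec z = 0 ∧ z ⬝ᵥ V.mulVec z < 0 := by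
  have key : ∀ k : ℕ, ∃ z : Fin n → ℝ, z ⬝ᵥ z = 1 ∧
      ρ + z ⬝ᵥ V *ᵥ z + ((k : ℝ) + 1) * ((E *ᵥ z) ⬝ᵥ (E *ᵥ z)) ≤ 0 := by
    intro k
    have hμ : (0:ℝ) < (k:ℝ) + 1 := by positivity
    have herm : (ρ • (1 : Matrix (Fin n) (Fin n) ℝ) + V + ((k:ℝ)+1) • (E.transpose * E)).IsHermitian := by
      rw [Matrix.IsHermitian, conjTranspose_eq_transpose_of_trivial]
      simp [transpose_add, transpose_smul, transpose_mul, transpose_transpose, hV.eq]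
    obtain ⟨z, hz1, hz2⟩ := exists_unit_nonpos _ herm (h _ hμ)
    refine ⟨z, hz1, ?_⟩
    have hE : z ⬝ᵥ (Eᵀ * E) *ᵥ z = (E *ᵥ z) ⬝ᵥ (E *ᵥ z) := by
      rw [← Matrix.mulVec_mulVec, Matrix.dotProduct_mulVec, vecMul_transpose]
    rwa [add_mulVec, add_mulVec, dotProduct_add, dotProduct_add, smul_mulVec,
      one_mulVec, dotProduct_smul, hz1, smul_eq_mul, mul_one, smul_mulVec,
      dotProduct_smul, smul_eq_mul, hE] at hz2
  choose z hz1 hz2 using key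
  -- the unit sphere is compact
  set S : Set (Fin n → ℝ) := {v | v ⬝ᵥ v = 1} with hS
  have qcont : Continuous fun v : Fin n → ℝ => v ⬝ᵥ v :=
    cont_dot.comp (continuous_id.prodMk continuous_id)
  have hScl : IsClosed S := isClosed_eq qcont continuous_const
  have hSsub : S ⊆ Metric.closedBall 0 1 := by
    intro v hv
    rw [Metric.mem_closedBall, dist_zero_right]
    rw [pi_norm_le_iff_of_nonneg zero_le_one]
    intro i
    rw [Real.norm_eq_abs]
    exact abs_le_one_of_unit hv i
  have hScompact : IsCompact S :=
    (isCompact_closedBall (0 : Fin n → ℝ) 1).of_isClosed_subset hScl hSsub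
  have hmem : ∀ k, z k ∈ S := hz1
  obtain ⟨w, hwS, φ, hφ, hconv⟩ := hScompact.tendsto_subseq hmem
  -- bound on quadratic form
  set C : ℝ := ∑ i, ∑ j, |V i j| with hC
  have hC0 : 0 ≤ C := Finset.sum_nonneg fun i _ => Finset.sum_nonneg fun j _ => abs_nonneg _
  have hq_bd : ∀ k, |z k ⬝ᵥ V *ᵥ z k| ≤ C := fun k =>
    quad_bound V (z k) (abs_le_one_of_unit (hz1 k))
  have he_nonneg : ∀ k, 0 ≤ (E *ᵥ z k) ⬝ᵥ (E *ᵥ z k) := fun k => dot_self_nonneg _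
  have hq_le : ∀ k, z k ⬝ᵥ V *ᵥ z k ≤ -ρ := by
    intro k
    have h1 := hz2 k
    have h2 : 0 ≤ ((k : ℝ) + 1) * ((E *ᵥ z k) ⬝ᵥ (E *ᵥ z k)) :=
      mul_nonneg (by positivity) (he_nonneg k)
    linarith
  have he_le : ∀ k, (E *ᵥ z k) ⬝ᵥ (E *ᵥ z k) ≤ C / ((k : ℝ) + 1) := by
    intro k
    have h1 := hz2 k
    have h2 : -(z k ⬝ᵥ V *ᵥ z k) ≤ C := (neg_le_abs _).trans (hq_bd k)
    have hk : (0:ℝ) < (k:ℝ) + 1 := by positivity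
    rw [le_div_iff₀ hk]
    nlinarith
  -- limits
  have cqV : Continuous fun v : Fin n → ℝ => v ⬝ᵥ V *ᵥ v :=
    cont_dot.comp (continuous_id.prodMk (cont_mulVec V))
  have cqE : Continuous fun v : Fin n → ℝ => (E *ᵥ v) ⬝ᵥ (E *ᵥ v) :=
    cont_dot.comp ((cont_mulVec E).prodMk (cont_mulVec E))
  have limV : Tendsto (fun k => z (φ k) ⬝ᵥ V *ᵥ z (φ k)) atTop (𝓝 (w ⬝ᵥ V *ᵥ w)) :=
    (cqV.tendsto w).comp hconv
  have limE : Tendsto (fun k => (E *ᵥ z (φ k)) ⬝ᵥ (E *ᵥ z (φ k))) atTop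
      (𝓝 ((E *ᵥ w) ⬝ᵥ (E *ᵥ w))) := (cqE.tendsto w).comp hconv
  have hbound : Tendsto (fun k : ℕ => C / ((k : ℝ) + 1)) atTop (𝓝 0) :=
    Tendsto.div_atTop tendsto_const_nhds
      (tendsto_atTop_add_const_right _ 1 tendsto_natCast_atTop_atTop)
  have limE0 : Tendsto (fun k => (E *ᵥ z (φ k)) ⬝ᵥ (E *ᵥ z (φ k))) atTop (𝓝 0) := by
    apply squeeze_zero (fun k => he_nonneg (φ k)) ?_ hbound
    intro k
    calc (E *ᵥ z (φ k)) ⬝ᵥ (E *ᵥ z (φ k)) ≤ C / ((φ k : ℝ) + 1) := he_le (φ k)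
      _ ≤ C / ((k : ℝ) + 1) := by
          exact div_le_div_of_nonneg_left hC0 (by positivity)
            (add_le_add_left (Nat.cast_le.mpr hφ.le_apply) 1)
  have hE0 : (E *ᵥ w) ⬝ᵥ (E *ᵥ w) = 0 := tendsto_nhds_unique limE limE0
  have hEw : E *ᵥ w = 0 := dotProduct_self_eq_zero.mp hE0
  have hqw : w ⬝ᵥ V *ᵥ w ≤ -ρ :=
    le_of_tendsto limV (Eventually.of_forall fun k => hq_le (φ k))
  exact ⟨w, hwS, hEw, hqw.trans_lt (by linarith)⟩
end
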